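/- Let F : ℝ → ℝ be twice continuously differentiable and let C > 0 satisfy F(s) ≥ −C s² for all s ∈ ℝ. Then for every R > 0 there exists a constant C(R) > 0 such that for all u, w ∈ ℝ with |u| ≤ R one has F(u+w) − F(u) − F'(u)·w ≥ −C(R)·w². (Hypothesis (H21) implies estimate (H11).) -/

import Mathlib

/-- hypothesis (H21) implies estimate (H11). If `F` is `C²` and
`F s ≥ -C s²` for all `s`, then for every `R > 0` there is `C(R) > 0` such that
`F (u+w) - F u - F' u · w ≥ -C(R) w²` whenever `|u| ≤ R`. -/
theorem statement4 (F : ℝ → ℝ) (hF : ContDiff ℝ 2 F) (C : ℝ) (hC : 0 < C)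
    (hH21 : ∀ s : ℝ, F s ≥ -C * s ^ 2) :
    ∀ R : ℝ, 0 < R → ∃ CR : ℝ, 0 < CR ∧ ∀ u w : ℝ, |u| ≤ R →
      F (u + w) - F u - deriv F u * w ≥ -CR * w ^ 2 := by
  intro R hR
  have hFdiff : Differentiable ℝ F := hF.differentiable (by norm_num)
  have hF'cont : Continuous (deriv F) := hF.continuous_deriv (by norm_num)
  have hF1 : ContDiff ℝ 1 (deriv F) := by
    have := (contDiff_succ_iff_deriv (n := 1)).mp (by exact_mod_cast hF)
    exact this.2.2
  have hF''cont : Continuous (deriv (deriv F)) := hF1.continuous_deriv le_rfl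
  -- bound A for |F| on [-R, R]
  obtain ⟨A, hA⟩ := (isCompact_Icc (a := -R) (b := R)).exists_bound_of_continuousOn
    hF.continuous.continuousOn
  -- bound B for |F'| on [-R, R]
  obtain ⟨B, hB⟩ := (isCompact_Icc (a := -R) (b := R)).exists_bound_of_continuousOn
    hF'cont.continuousOn
  -- bound M for |F''| on [-(R+1), R+1]
  obtain ⟨M, hM⟩ := (isCompact_Icc (a := -(R + 1)) (b := R + 1)).exists_bound_of_continuousOn
    hF''cont.continuousOn
  have hA0 : 0 ≤ A := le_trans (norm_nonneg _) (hA 0 (by constructor <;> linarith))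
  have hB0 : 0 ≤ B := le_trans (norm_nonneg _) (hB 0 (by constructor <;> linarith))
  have hM0 : 0 ≤ M := le_trans (norm_nonneg _) (hM 0 (by constructor <;> linarith))
  refine ⟨M + 2 * C * R ^ 2 + 2 * C + A + B + 1, by positivity, ?_⟩
  intro u w hu
  have hu1 : -R ≤ u := (abs_le.mp hu).1
  have hu2 : u ≤ R := (abs_le.mp hu).2
  rcases le_or_gt (|w|) 1 with hw | hw
  · -- small w : use the second derivative bound on [-(R+1), R+1]
    have hw1 : -1 ≤ w := (abs_le.mp hw).1
    have hw2 : w ≤ 1 := (abs_le.mp hw).2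
    -- F' is M-Lipschitz on Icc (-(R+1)) (R+1)
    have hlip : ∀ x ∈ Set.Icc (-(R + 1)) (R + 1), |deriv F x - deriv F u| ≤ M * |x - u| := by
      intro x hx
      have hus : u ∈ Set.Icc (-(R + 1)) (R + 1) := by constructor <;> linarith
      have := (convex_Icc (-(R + 1)) (R + 1)).norm_image_sub_le_of_norm_deriv_le
        (fun y _ => (hF1.differentiable one_ne_zero).differentiableAt) hM hus hx
      simpa [Real.norm_eq_abs] using this
    -- apply MVT to g x = F x - deriv F u * x on the segment from u to u + w
    set s : Set ℝ := Set.uIcc u (u + w) with hs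
    have hsub : s ⊆ Set.Icc (-(R + 1)) (R + 1) := by
      intro x hx
      have h1 := hx.1
      have h2 := hx.2
      rcases le_total u (u + w) with h | h
      · rw [hs, Set.uIcc_of_le h] at hx
        exact ⟨by linarith [hx.1], by linarith [hx.2]⟩
      · rw [hs, Set.uIcc_of_ge h] at hx
        exact ⟨by linarith [hx.1], by linarith [hx.2]⟩
    have hdist : ∀ x ∈ s, |x - u| ≤ |w| := by
      intro x hx
      rcases le_total u (u + w) with h | h
      · rw [hs, Set.uIcc_of_le h] at hx
        rw [abs_le]
        constructor
        · nlinarith [hx.1, abs_nonneg w]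
        · nlinarith [hx.2, le_abs_self w]
      · rw [hs, Set.uIcc_of_ge h] at hx
        rw [abs_le]
        constructor
        · nlinarith [hx.1, neg_abs_le w]
        · nlinarith [hx.2, abs_nonneg w]
    have hg : ∀ x : ℝ, HasDerivAt (fun y => F y - deriv F u * y)
        (deriv F x - deriv F u) x := by
      intro x
      have h1 : HasDerivAt F (deriv F x) x := (hFdiff x).hasDerivAt
      have h2 : HasDerivAt (fun y : ℝ => deriv F u * y) (deriv F u * 1) x :=
        (hasDerivAt_id x).const_mul (deriv F u)
      have h3 := h1.sub h2; rw [mul_one] at h3; exact h3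
    have hbound : ∀ x ∈ s, ‖deriv F x - deriv F u‖ ≤ M * |w| := by
      intro x hx
      rw [Real.norm_eq_abs]
      calc |deriv F x - deriv F u| ≤ M * |x - u| := hlip x (hsub hx)
        _ ≤ M * |w| := by
            exact mul_le_mul_of_nonneg_left (hdist x hx) hM0
    have hmem1 : u ∈ s := Set.left_mem_uIcc
    have hmem2 : u + w ∈ s := Set.right_mem_uIcc
    have key := (convex_uIcc u (u + w)).norm_image_sub_le_of_norm_hasDerivWithin_le
      (fun x _ => (hg x).hasDerivWithinAt) hbound hmem1 hmem2
    have key' : |F (u + w) - F u - deriv F u * w| ≤ M * |w| * |w| := by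
      have : (F (u + w) - deriv F u * (u + w)) - (F u - deriv F u * u)
          = F (u + w) - F u - deriv F u * w := by ring
      rw [Real.norm_eq_abs, Real.norm_eq_abs] at key
      calc |F (u + w) - F u - deriv F u * w|
          = |(F (u + w) - deriv F u * (u + w)) - (F u - deriv F u * u)| := by rw [this]
        _ ≤ M * |w| * |(u + w) - u| := by simpa using key
        _ = M * |w| * |w| := by congr 1; congr 1; ring
    have h1 : -(M * |w| * |w|) ≤ F (u + w) - F u - deriv F u * w :=
      neg_le_of_abs_le key'
    have hww : |w| * |w| = w ^ 2 := by rw [← abs_mul, ← sq, abs_sq]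
    rw [mul_assoc, hww] at h1
    have h9 : 0 ≤ (2 * C * R ^ 2 + 2 * C + A + B + 1) * w ^ 2 := by positivity
    nlinarith [h1, h9]
  · -- large w : |w| > 1
    have hw2 : 1 ≤ w ^ 2 := by nlinarith [sq_abs w]
    have h1 : F (u + w) ≥ -C * (u + w) ^ 2 := hH21 (u + w)
    have h2 : |F u| ≤ A := by
      have := hA u ⟨hu1, hu2⟩; simpa [Real.norm_eq_abs] using this
    have h3 : |deriv F u| ≤ B := by
      have := hB u ⟨hu1, hu2⟩; simpa [Real.norm_eq_abs] using this
    have h4 : (u + w) ^ 2 ≤ 2 * R ^ 2 + 2 * w ^ 2 := by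
      nlinarith [sq_nonneg (u - w), mul_nonneg (by linarith : (0:ℝ) ≤ R - u)
        (by linarith : (0:ℝ) ≤ R + u)]
    have habsw : |w| ≤ w ^ 2 := by nlinarith [sq_abs w, hw, abs_nonneg w]
    have h5 : -deriv F u * w ≥ -(B * w ^ 2) := by
      have h51 : deriv F u * w ≤ |deriv F u * w| := le_abs_self _
      rw [abs_mul] at h51
      have h52 : |deriv F u| * |w| ≤ B * w ^ 2 :=
        mul_le_mul h3 habsw (abs_nonneg w) hB0
      linarith
    have h6 : -F u ≥ -(A * w ^ 2) := by
      have h61 : F u ≤ |F u| := le_abs_self _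
      have h62 : A ≤ A * w ^ 2 := by nlinarith [hA0, hw2]
      linarith
    have h7 : C * (u + w) ^ 2 ≤ (2 * C * R ^ 2 + 2 * C) * w ^ 2 := by
      nlinarith [mul_le_mul_of_nonneg_left h4 hC.le,
        mul_nonneg (mul_nonneg hC.le (sq_nonneg R)) (by linarith : (0:ℝ) ≤ w ^ 2 - 1)]
    have h8 : 0 ≤ (M + 1) * w ^ 2 := by positivity
    nlinarith [h1, h5, h6, h7, h8]
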